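/- If an R-module M satisfies the dual of strong Property A (i.e., for any a₁,...,aₙ ∈ W_R(M) there exists a completely irreducible submodule L of M with aᵢM ⊆ L ≠ M for all i), then W_R(M) is an ideal of R (i.e., M is secondal). -/

import Mathlib

open Pointwise

/-- A proper submodule `L` is completely irreducible if whenever `L` is the intersection of a
family of submodules, `L` equals one of them. -/
def CompletelyIrreducible {R M : Type*} [CommRing R] [AddCommGroup M] [Module R M]
    (L : Submodule R M) : Prop :=
  L ≠ ⊤ ∧ ∀ s : Set (Submodule R M), L = sInf s → L ∈ s

/-- If `M` satisfies the dual of strong Property A, then `W_R(M)` is an ideal of `R`. -/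
theorem stmt0 {R M : Type*} [CommRing R] [AddCommGroup M] [Module R M]
    (h : ∀ (n : ℕ) (a : Fin n → R), (∀ i, a i • (⊤ : Submodule R M) ≠ ⊤) →
      ∃ L : Submodule R M, CompletelyIrreducible L ∧ ∀ i, a i • (⊤ : Submodule R M) ≤ L) :
    ∃ I : Ideal R, (I : Set R) = {r : R | r • (⊤ : Submodule R M) ≠ ⊤} := by
  refine ⟨{ carrier := {r : R | r • (⊤ : Submodule R M) ≠ ⊤}, add_mem' := ?_, zero_mem' := ?_, smul_mem' := ?_ }, rfl⟩
  · -- add_mem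
    rintro a b (ha : _ ≠ _) (hb : _ ≠ _)
    obtain ⟨L, ⟨hL, -⟩, hle⟩ := h 2 ![a, b] (by
      intro i
      fin_cases i <;> simpa using ‹_›)
    have h0 : a • (⊤ : Submodule R M) ≤ L := by simpa using hle 0
    have h1 : b • (⊤ : Submodule R M) ≤ L := by simpa using hle 1
    intro hab
    apply hL
    rw [eq_top_iff]
    intro x _
    have : (a + b) • x ∈ (a + b) • (⊤ : Submodule R M) :=
      Submodule.smul_mem_pointwise_smul x _ _ Submodule.mem_top
    have hx : (a + b) • x ∈ (⊤ : Submodule R M) := Submodule.mem_top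
    -- every element of ⊤ is in (a+b) • ⊤ by hab
    have hy : x ∈ (a + b) • (⊤ : Submodule R M) := by rw [hab]; trivial
    obtain ⟨m, -, rfl⟩ := Submodule.mem_map.mp hy
    simp only [DistribSMul.toLinearMap_apply]
    have h1' : (a + b) • m = a • m + b • m := add_smul a b m
    rw [h1']
    exact L.add_mem (h0 (Submodule.smul_mem_pointwise_smul m a ⊤ Submodule.mem_top))
      (h1 (Submodule.smul_mem_pointwise_smul m b ⊤ Submodule.mem_top))
  · -- zero_mem
    obtain ⟨L, ⟨hL, -⟩, -⟩ := h 0 ![] (fun i => i.elim0)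
    intro h0
    apply hL
    rw [eq_top_iff]
    intro x _
    have hy : x ∈ (0 : R) • (⊤ : Submodule R M) := by rw [h0]; trivial
    obtain ⟨m, -, rfl⟩ := Submodule.mem_map.mp hy
    simp only [DistribSMul.toLinearMap_apply]
    rw [zero_smul]
    exact L.zero_mem
  · -- smul_mem
    rintro c a (ha : _ ≠ _) hca
    rw [smul_eq_mul] at hca
    apply ha
    rw [eq_top_iff]
    intro x _
    have hy : x ∈ (c * a) • (⊤ : Submodule R M) := by rw [hca]; trivial
    obtain ⟨m, -, rfl⟩ := Submodule.mem_map.mp hy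
    simp only [DistribSMul.toLinearMap_apply]
    rw [mul_smul, smul_comm]
    exact Submodule.smul_mem_pointwise_smul _ _ _ Submodule.mem_top
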